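/- Let B ≥ 1 be an integer, α a natural number with 1 < α < 2^{2B}, and set t_i = α^i. Suppose U'(i) = σ√(2 log(4K t_i²/δ)/t_i) for constants σ > 0, K ≥ 1, δ > 0. Define U(0) = b - a and U(i) = U'(i) + (1/2^B)(U'(i) + U(i-1)). Then for all i ≥ 1, U(i) ≤ (1 + 1/2^B) · (2^B/(2^B - √α)) · U'(i) + (1/2^B)^i (b - a). -/
import Mathlib


/-- In the ICQ-SE setup with `t i = α^i` and subgaussian confidence widths `U'`,
the inflated width `U` is bounded by a geometric-sum constant times `U' i`
plus an exponentially vanishing term. -/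
theorem ICQ_width_geometric_bound (B : ℕ) (hB : 1 ≤ B) (α : ℕ) (hα1 : 1 < α)
    (hα2 : α < 2 ^ (2 * B)) (σ : ℝ) (hσ : 0 < σ) (K : ℝ) (hK : 1 ≤ K)
    (δ : ℝ) (hδ : 0 < δ) (a b : ℝ)
    (t : ℕ → ℕ) (ht : ∀ i, t i = α ^ i)
    (U U' : ℕ → ℝ)
    (hU' : ∀ i, U' i = σ * Real.sqrt (2 * Real.log (4 * K * (t i : ℝ) ^ 2 / δ) / (t i : ℝ)))
    (hU0 : U 0 = b - a)
    (hUrec : ∀ i, 1 ≤ i → U i = U' i + (1 / 2 ^ B) * (U' i + U (i - 1))) :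
    ∀ i, 1 ≤ i →
      U i ≤ (1 + 1 / 2 ^ B) * ((2 ^ B : ℝ) / (2 ^ B - Real.sqrt α)) * U' i
        + (1 / 2 ^ B : ℝ) ^ i * (b - a) := by
  have hα0 : (0:ℝ) < (α:ℝ) := by exact_mod_cast Nat.lt_trans Nat.zero_lt_one hα1
  have h2B : (0:ℝ) < 2 ^ B := by positivity
  have hsB : Real.sqrt α < 2 ^ B := by
    have h1 : ((α:ℝ)) < ((2:ℝ) ^ B) ^ 2 := by
      rw [← pow_mul, mul_comm]
      exact_mod_cast hα2
    exact (Real.sqrt_lt' h2B).mpr h1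
  have hD : 0 < (2:ℝ) ^ B - Real.sqrt α := by linarith
  have hs0 : (0:ℝ) ≤ Real.sqrt α := Real.sqrt_nonneg _
  set q : ℝ := 1 / 2 ^ B with hq
  have hq0 : 0 < q := by positivity
  set C : ℝ := (1 + q) * ((2:ℝ) ^ B / (2 ^ B - Real.sqrt α)) with hC
  have hCnn : 0 ≤ C := by positivity
  have hC1 : 1 + q ≤ C := by
    rw [hC]
    nth_rewrite 1 [← mul_one (1 + q)]
    apply mul_le_mul_of_nonneg_left _ (by positivity)
    rw [le_div_iff₀ hD]
    linarith
  have hU'nn : ∀ j, 0 ≤ U' j := fun j => by rw [hU']; positivity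
  have hstep : ∀ j, U' j ≤ Real.sqrt α * U' (j + 1) := by
    intro j
    have hαj : (0:ℝ) < (α:ℝ) ^ j := by positivity
    rw [hU', hU', ht, ht]
    push_cast
    rw [mul_left_comm, ← Real.sqrt_mul hα0.le]
    apply mul_le_mul_of_nonneg_left _ hσ.le
    apply Real.sqrt_le_sqrt
    have hlog : Real.log (4 * K * ((α:ℝ) ^ j) ^ 2 / δ)
        ≤ Real.log (4 * K * ((α:ℝ) ^ (j + 1)) ^ 2 / δ) := by
      have hK0 : (0:ℝ) < K := lt_of_lt_of_le one_pos hK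
      apply Real.log_le_log (by positivity)
      have : ((α:ℝ) ^ j) ^ 2 ≤ ((α:ℝ) ^ (j + 1)) ^ 2 := by
        have : (α:ℝ) ^ j ≤ (α:ℝ) ^ (j + 1) := by
          apply pow_le_pow_right₀ (by exact_mod_cast hα1.le) (by omega)
        nlinarith
      gcongr
    have heq : (α:ℝ) * (2 * Real.log (4 * K * ((α:ℝ) ^ (j + 1)) ^ 2 / δ) / (α:ℝ) ^ (j + 1))
        = 2 * Real.log (4 * K * ((α:ℝ) ^ (j + 1)) ^ 2 / δ) / (α:ℝ) ^ j := by
      rw [pow_succ]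
      field_simp
      ring
    rw [heq]
    gcongr
  have hkey : (1 + q) + q * Real.sqrt α * C = C := by
    rw [hC, hq]
    field_simp
    ring
  intro i hi
  induction i, hi using Nat.le_induction with
  | base =>
    rw [hUrec 1 le_rfl]
    norm_num [hU0]
    have h1 := mul_le_mul_of_nonneg_right hC1 (hU'nn 1)
    nlinarith [hU'nn 1]
  | succ n hn ih =>
    rw [hUrec (n + 1) (by omega), Nat.add_sub_cancel]
    have h2 := hstep n
    have h3 : C * U' n ≤ C * Real.sqrt α * U' (n + 1) := by
      have := mul_le_mul_of_nonneg_left h2 hCnn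
      linarith [this]
    have h4 : U n ≤ C * Real.sqrt α * U' (n + 1) + q ^ n * (b - a) := by linarith
    have h5 := mul_le_mul_of_nonneg_left h4 hq0.le
    have h6 : ((1 + q) + q * Real.sqrt α * C) * U' (n + 1) = C * U' (n + 1) := by
      rw [hkey]
    have hpow : q ^ (n + 1) = q * q ^ n := by ring
    rw [hpow]
    nlinarith [h5, h6]
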